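/- Let (a,b) be a fictitious-play trajectory. Suppose t ≥ 1, round t−1 is axis-crossing, and τ is the smallest axis-crossing round with τ > t−1. Then ρ_t − 2 ≤ τ − t ≤ ρ_t. -/
import Mathlib


open MeasureTheory

/-- Bob's choice of the left or right piece. -/
inductive Choice
  | L
  | R
deriving DecidableEq

/-- The cumulative valuation `V(x) = ∫_0^x v`. -/
noncomputable def cumul (v : ℝ → ℝ) (x : ℝ) : ℝ := ∫ y in (0:ℝ)..x, v y

/-- `v` is an integrable value density on `[0,1]`, bounded between `lo` and `hi`,
integrating to `1`. -/
def IsDensity (lo hi : ℝ) (v : ℝ → ℝ) : Prop :=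
  IntervalIntegrable v volume 0 1 ∧
  (∀ x ∈ Set.Icc (0:ℝ) 1, lo ≤ v x ∧ v x ≤ hi) ∧
  (∫ y in (0:ℝ)..1, v y) = 1

/-- Alice's round-`t` utility: if Bob picks `L` she gets `[a_t,1]`, else `[0,a_t]`. -/
noncomputable def uA (vA : ℝ → ℝ) (a : ℕ → ℝ) (b : ℕ → Choice) (t : ℕ) : ℝ :=
  if b t = Choice.L then 1 - cumul vA (a t) else cumul vA (a t)

/-- Bob's round-`t` utility: if he picks `L` he gets `[0,a_t]`, else `[a_t,1]`. -/
noncomputable def uB (vB : ℝ → ℝ) (a : ℕ → ℝ) (b : ℕ → Choice) (t : ℕ) : ℝ :=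
  if b t = Choice.L then cumul vB (a t) else 1 - cumul vB (a t)

/-- `α_t = r_t − ℓ_t`: number of `R` choices minus number of `L` choices up to round `t`. -/
noncomputable def alphaFP (b : ℕ → Choice) (t : ℕ) : ℝ :=
  ∑ i ∈ Finset.Icc 1 t, (if b i = Choice.R then (1:ℝ) else -1)

/-- `β_t = Σ_{i=1}^t (2 V_B(a_i) − 1)`. -/
noncomputable def betaFP (vB : ℝ → ℝ) (a : ℕ → ℝ) (t : ℕ) : ℝ :=
  ∑ i ∈ Finset.Icc 1 t, (2 * cumul vB (a i) - 1)

/-- The radius `ρ_t = |α_t| + |β_t|`. -/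
noncomputable def rhoFP (vB : ℝ → ℝ) (a : ℕ → ℝ) (b : ℕ → Choice) (t : ℕ) : ℝ :=
  |alphaFP b t| + |betaFP vB a t|

/-- `(a,b)` is a fictitious-play trajectory. -/
def IsFictitiousPlay (vB : ℝ → ℝ) (a : ℕ → ℝ) (b : ℕ → Choice) : Prop :=
  ∀ t : ℕ,
    (0 < alphaFP b t → a (t+1) = 1) ∧
    (alphaFP b t < 0 → a (t+1) = 0) ∧
    (0 < betaFP vB a t → b (t+1) = Choice.L) ∧
    (betaFP vB a t < 0 → b (t+1) = Choice.R)

/-- Round `t` is axis-crossing. -/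
def AxisCrossing (vB : ℝ → ℝ) (a : ℕ → ℝ) (b : ℕ → Choice) (t : ℕ) : Prop :=
  alphaFP b t = 0 ∨
  (betaFP vB a t ≤ 0 ∧ 0 < betaFP vB a (t+1)) ∨
  (0 ≤ betaFP vB a t ∧ betaFP vB a (t+1) < 0)


namespace FPAux

/-- Abstract axis-crossing predicate. -/
def Cross (A B : ℕ → ℝ) (s : ℕ) : Prop :=
  A s = 0 ∨ (B s ≤ 0 ∧ 0 < B (s+1)) ∨ (0 ≤ B s ∧ B (s+1) < 0)

/-- Abstract fictitious-play step system. -/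
structure FPSys (A B : ℕ → ℝ) : Prop where
  s1 : ∀ s, 0 < A s → B (s+1) = B s + 1
  s2 : ∀ s, A s < 0 → B (s+1) = B s - 1
  s3 : ∀ s, 0 < B s → A (s+1) = A s - 1
  s4 : ∀ s, B s < 0 → A (s+1) = A s + 1
  s5 : ∀ s, |B (s+1) - B s| ≤ 1
  s6 : ∀ s, A (s+1) = A s + 1 ∨ A (s+1) = A s - 1
  int : ∀ s, ∃ n : ℤ, A s = n

lemma FPSys.neg {A B : ℕ → ℝ} (h : FPSys A B) :
    FPSys (fun u => -A u) (fun u => -B u) := by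
  constructor
  · intro u hu
    have := h.s2 u (by simpa using hu)
    linarith
  · intro u hu
    have := h.s1 u (by simpa using hu)
    linarith
  · intro u hu
    have := h.s4 u (by simpa using hu)
    linarith
  · intro u hu
    have := h.s3 u (by simpa using hu)
    linarith
  · intro u
    have := h.s5 u
    rw [show -B (u+1) - -B u = -(B (u+1) - B u) by ring, abs_neg]
    exact this
  · intro u
    rcases h.s6 u with e | e
    · right; linarith
    · left; linarith
  · intro u
    obtain ⟨n, hn⟩ := h.int u
    exact ⟨-n, by simp [hn]⟩

lemma cross_neg {A B : ℕ → ℝ} {u : ℕ} :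
    Cross (fun s => -A s) (fun s => -B s) u ↔ Cross A B u := by
  unfold Cross
  simp only [neg_eq_zero]
  constructor
  · rintro (h | ⟨h1, h2⟩ | ⟨h1, h2⟩)
    · exact Or.inl h
    · exact Or.inr (Or.inr ⟨by linarith, by linarith⟩)
    · exact Or.inr (Or.inl ⟨by linarith, by linarith⟩)
  · rintro (h | ⟨h1, h2⟩ | ⟨h1, h2⟩)
    · exact Or.inl h
    · exact Or.inr (Or.inr ⟨by linarith, by linarith⟩)
    · exact Or.inr (Or.inl ⟨by linarith, by linarith⟩)

lemma run_pp {A B : ℕ → ℝ}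
    (hS1 : ∀ s, 0 < A s → B (s+1) = B s + 1)
    (hS3 : ∀ s, 0 < B s → A (s+1) = A s - 1)
    (t : ℕ) (m : ℕ) (hm : A t = m) (hm1 : 1 ≤ m) (hBt : 0 < B t) :
    ∀ j, j ≤ m → A (t+j) = (m:ℝ) - j ∧ B (t+j) = B t + j := by
  intro j
  induction j with
  | zero => intro _; simp [hm]
  | succ k ih =>
    intro hk
    obtain ⟨hAk, hBk⟩ := ih (by omega)
    have hkm : (k:ℝ) + 1 ≤ m := by exact_mod_cast hk
    have hApos : 0 < A (t+k) := by rw [hAk]; linarith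
    have hBpos : 0 < B (t+k) := by rw [hBk]; have := Nat.cast_nonneg (α := ℝ) k; linarith
    constructor
    · have h3 := hS3 (t+k) hBpos
      rw [show t+(k+1) = (t+k)+1 from rfl, h3, hAk]
      push_cast; ring
    · have h1 := hS1 (t+k) hApos
      rw [show t+(k+1) = (t+k)+1 from rfl, h1, hBk]
      push_cast; ring

lemma run_mp {A B : ℕ → ℝ}
    (hS2 : ∀ s, A s < 0 → B (s+1) = B s - 1)
    (hS3 : ∀ s, 0 < B s → A (s+1) = A s - 1)
    (t : ℕ) (hA : A t = -1) (j0 : ℕ) (hj0 : (j0:ℝ) ≤ B t) :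
    ∀ j, j ≤ j0 → A (t+j) = -1 - j ∧ B (t+j) = B t - j := by
  intro j
  induction j with
  | zero => intro _; simp [hA]
  | succ k ih =>
    intro hk
    obtain ⟨hAk, hBk⟩ := ih (by omega)
    have hkj : (k:ℝ) + 1 ≤ j0 := by exact_mod_cast hk
    have hAneg : A (t+k) < 0 := by
      rw [hAk]; have := Nat.cast_nonneg (α := ℝ) k; linarith
    have hBpos : 0 < B (t+k) := by rw [hBk]; linarith
    constructor
    · have h3 := hS3 (t+k) hBpos
      rw [show t+(k+1) = (t+k)+1 from rfl, h3, hAk]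
      push_cast; ring
    · have h2 := hS2 (t+k) hAneg
      rw [show t+(k+1) = (t+k)+1 from rfl, h2, hBk]
      push_cast; ring

lemma tau_eq {A B : ℕ → ℝ} {s τ n : ℕ}
    (hτ : s < τ) (hτc : Cross A B τ) (hτf : ∀ u, s < u → u < τ → ¬Cross A B u)
    (hcr : Cross A B (s+1+n))
    (hnc : ∀ j, j < n → ¬ Cross A B (s+1+j)) : τ = s+1+n := by
  rcases lt_trichotomy τ (s+1+n) with hlt | he | hgt
  · exfalso
    have e : τ = s+1+(τ-(s+1)) := by omega
    exact hnc (τ-(s+1)) (by omega) (by rw [← e]; exact hτc)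
  · exact he
  · exact absurd hcr (hτf (s+1+n) (by omega) hgt)

lemma not_two_le {A B : ℕ → ℝ} (h : FPSys A B) {s : ℕ}
    (h0 : Cross A B s) (h1 : Cross A B (s+1)) : ¬ (2 ≤ A (s+1)) := by
  intro h2
  have hAs : 0 < A s := by rcases h.s6 s with e | e <;> linarith
  have hB1 : B (s+1) = B s + 1 := h.s1 s hAs
  have hB2 : B (s+1+1) = B (s+1) + 1 := h.s1 (s+1) (by linarith)
  rcases h1 with hα | ⟨hb1, _⟩ | ⟨hb1, hb2⟩
  · linarith
  · rcases h0 with hα0 | ⟨_, hb⟩ | ⟨hb, _⟩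
    · linarith
    · linarith
    · linarith
  · linarith

lemma double_cross {A B : ℕ → ℝ} (h : FPSys A B) {s : ℕ}
    (h0 : Cross A B s) (h1 : Cross A B (s+1)) :
    |A (s+1)| + |B (s+1)| ≤ 2 := by
  have hA : |A (s+1)| ≤ 1 := by
    obtain ⟨n, hn⟩ := h.int (s+1)
    have t1 := not_two_le h h0 h1
    have t2' := not_two_le h.neg (cross_neg.mpr h0) (cross_neg.mpr h1)
    have t2 : ¬ ((2:ℝ) ≤ -A (s+1)) := t2'
    rw [hn] at t1 t2 ⊢
    have hn1 : (n:ℝ) < 2 := lt_of_not_ge t1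
    have hn2 : -(n:ℝ) < 2 := by
      rw [← Int.cast_neg] at t2 ⊢
      push_cast at t2 ⊢
      linarith [lt_of_not_ge t2]
    have e1 : n < 2 := by exact_mod_cast hn1
    have e2 : -n < 2 := by exact_mod_cast hn2
    rw [abs_le]
    constructor
    · have : (-1 : ℤ) ≤ n := by omega
      exact_mod_cast this
    · have : n ≤ (1 : ℤ) := by omega
      exact_mod_cast this
  have hB : |B (s+1)| ≤ 1 := by
    rw [abs_le]
    have h5 := h.s5 s
    have h6 := h.s5 (s+1)
    rw [abs_le] at h5 h6
    rcases h1 with hα | ⟨hb1, hb2⟩ | ⟨hb1, hb2⟩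
    · rcases h0 with hα0 | ⟨hb, hb'⟩ | ⟨hb, hb'⟩
      · exfalso; rcases h.s6 s with e | e <;> rw [hα, hα0] at e <;> linarith
      · constructor <;> linarith
      · constructor <;> linarith
    · constructor <;> linarith
    · constructor <;> linarith
  linarith

lemma case_pp {A B : ℕ → ℝ} (h : FPSys A B) {s τ : ℕ}
    (h0 : Cross A B s) (hτ : s < τ) (hτc : Cross A B τ)
    (hτf : ∀ u, s < u → u < τ → ¬Cross A B u)
    (hApos : 0 < A (s+1)) (hBpos : 0 < B (s+1)) :
    |A (s+1)| + |B (s+1)| - 2 ≤ (τ:ℝ) - ((s:ℝ)+1) ∧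
      (τ:ℝ) - ((s:ℝ)+1) ≤ |A (s+1)| + |B (s+1)| := by
  have hB1 : B (s+1) ≤ 1 := by
    have h5 := h.s5 s
    rw [abs_le] at h5
    rcases h0 with hα | ⟨hud, _⟩ | ⟨_, hdn⟩
    · rcases lt_or_ge 0 (B s) with hBs | hBs
      · have h3 := h.s3 s hBs
        rw [hα] at h3; linarith
      · linarith
    · linarith
    · linarith
  obtain ⟨n, hn⟩ := h.int (s+1)
  have hn0 : 0 < n := by exact_mod_cast hn ▸ hApos
  set m := n.toNat with hmdef
  have hmcast : A (s+1) = (m:ℝ) := by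
    rw [hn]; rw [hmdef]
    norm_cast
    omega
  have hm1 : 1 ≤ m := by omega
  have run := run_pp h.s1 h.s3 (s+1) m hmcast hm1 hBpos
  have hcr : Cross A B (s+1+m) := by
    left
    rw [(run m le_rfl).1]; ring
  have hnc : ∀ j, j < m → ¬Cross A B (s+1+j) := by
    intro j hj hcrj
    obtain ⟨hAj, hBj⟩ := run j (le_of_lt hj)
    obtain ⟨hAj', hBj'⟩ := run (j+1) hj
    have hjm : (j:ℝ) + 1 ≤ m := by exact_mod_cast hj
    have hjn : (0:ℝ) ≤ j := Nat.cast_nonneg j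
    have hjn' : (0:ℝ) ≤ (j:ℝ) + 1 := by linarith
    rcases hcrj with hα | ⟨hb, _⟩ | ⟨_, hb'⟩
    · rw [hAj] at hα; linarith
    · rw [hBj] at hb; linarith
    · rw [show s+1+j+1 = s+1+(j+1) from rfl, hBj'] at hb'; push_cast at hb'; linarith
  have hτeq := tau_eq hτ hτc hτf hcr hnc
  have hτcast : (τ:ℝ) = (s:ℝ) + 1 + m := by rw [hτeq]; push_cast; ring
  rw [abs_of_pos hApos, abs_of_pos hBpos, hτcast, hmcast]
  constructor <;> linarith

lemma case_mp {A B : ℕ → ℝ} (h : FPSys A B) {s τ : ℕ}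
    (h0 : Cross A B s) (hτ : s < τ) (hτc : Cross A B τ)
    (hτf : ∀ u, s < u → u < τ → ¬Cross A B u)
    (hAneg : A (s+1) < 0) (hBpos : 0 < B (s+1)) :
    |A (s+1)| + |B (s+1)| - 2 ≤ (τ:ℝ) - ((s:ℝ)+1) ∧
      (τ:ℝ) - ((s:ℝ)+1) ≤ |A (s+1)| + |B (s+1)| := by
  obtain ⟨n, hn⟩ := h.int (s+1)
  have hA1 : A (s+1) = -1 := by
    by_contra hne
    have hnneg : n < 0 := by exact_mod_cast hn ▸ hAneg
    have hne' : n ≠ -1 := by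
      intro e
      apply hne
      rw [hn, e]; norm_num
    have hn2 : (n:ℝ) ≤ -2 := by
      have : n ≤ -2 := by omega
      exact_mod_cast this
    have hAs : A s < 0 := by
      rcases h.s6 s with e | e
      · linarith
      · rw [hn] at e; linarith
    have hBstep : B (s+1) = B s - 1 := h.s2 s hAs
    rcases h0 with hα | ⟨hb, _⟩ | ⟨_, hb'⟩
    · linarith
    · linarith
    · linarith
  set j0 := (⌊B (s+1)⌋).toNat with hj0def
  have hfl : (0:ℤ) ≤ ⌊B (s+1)⌋ := Int.floor_nonneg.mpr hBpos.le
  have hj0cast : (j0:ℝ) = ((⌊B (s+1)⌋ : ℤ) : ℝ) := by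
    rw [hj0def]; norm_cast; omega
  have hj0le : (j0:ℝ) ≤ B (s+1) := by rw [hj0cast]; exact Int.floor_le _
  have hj0lt : B (s+1) < (j0:ℝ) + 1 := by rw [hj0cast]; exact Int.lt_floor_add_one _
  have run := run_mp h.s2 h.s3 (s+1) hA1 j0 hj0le
  obtain ⟨hAj0, hBj0⟩ := run j0 le_rfl
  have hA0neg : A (s+1+j0) < 0 := by
    rw [hAj0]; have := Nat.cast_nonneg (α := ℝ) j0; linarith
  have hcr : Cross A B (s+1+j0) := by
    right; right
    constructor
    · rw [hBj0]; linarith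
    · rw [h.s2 _ hA0neg, hBj0]; linarith
  have hnc : ∀ j, j < j0 → ¬Cross A B (s+1+j) := by
    intro j hj hc
    obtain ⟨hAj, hBj⟩ := run j hj.le
    obtain ⟨_, hBj'⟩ := run (j+1) hj
    have hjc : (j:ℝ) + 1 ≤ j0 := by exact_mod_cast hj
    have hjn : (0:ℝ) ≤ j := Nat.cast_nonneg j
    rcases hc with hα | ⟨hb, _⟩ | ⟨_, hb'⟩
    · rw [hAj] at hα; linarith
    · rw [hBj] at hb; linarith
    · rw [show s+1+j+1 = s+1+(j+1) from rfl, hBj'] at hb'; push_cast at hb'; linarith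
  have hτeq := tau_eq hτ hτc hτf hcr hnc
  have hτcast : (τ:ℝ) = (s:ℝ) + 1 + j0 := by rw [hτeq]; push_cast; ring
  rw [abs_of_neg hAneg, abs_of_pos hBpos, hA1, hτcast]
  constructor <;> linarith

lemma abstract_spacing {A B : ℕ → ℝ} (h : FPSys A B) {s τ : ℕ}
    (h0 : Cross A B s) (hτ : s < τ) (hτc : Cross A B τ)
    (hτf : ∀ u, s < u → u < τ → ¬Cross A B u) :
    |A (s+1)| + |B (s+1)| - 2 ≤ (τ:ℝ) - ((s:ℝ)+1) ∧
      (τ:ℝ) - ((s:ℝ)+1) ≤ |A (s+1)| + |B (s+1)| := by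
  by_cases hc1 : Cross A B (s+1)
  · have hτeq : τ = s+1 := by
      rcases lt_trichotomy τ (s+1) with hlt | he | hgt
      · omega
      · exact he
      · exact absurd hc1 (hτf (s+1) (by omega) hgt)
    have hd := double_cross h h0 hc1
    have habs : 0 ≤ |A (s+1)| + |B (s+1)| := by positivity
    rw [hτeq]; push_cast
    constructor <;> linarith
  · have hA0 : A (s+1) ≠ 0 := fun e => hc1 (Or.inl e)
    have hB0 : B (s+1) ≠ 0 := by
      intro e
      rcases lt_trichotomy (A (s+1)) 0 with hlt | heq | hgt
      · exact hc1 (Or.inr (Or.inr ⟨e.ge, by rw [h.s2 (s+1) hlt, e]; norm_num⟩))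
      · exact hA0 heq
      · exact hc1 (Or.inr (Or.inl ⟨e.le, by rw [h.s1 (s+1) hgt, e]; norm_num⟩))
    have hτf' : ∀ u, s < u → u < τ → ¬Cross (fun v => -A v) (fun v => -B v) u :=
      fun u hu hu' hc => hτf u hu hu' (cross_neg.mp hc)
    rcases lt_trichotomy (A (s+1)) 0 with hAlt | heq | hAgt
    · rcases (lt_or_gt_of_ne hB0) with hBlt | hBgt
      · have := case_pp h.neg (cross_neg.mpr h0) hτ (cross_neg.mpr hτc) hτf'
          (by simpa using hAlt) (by simpa using hBlt)
        simpa [abs_neg] using this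
      · exact case_mp h h0 hτ hτc hτf hAlt hBgt
    · exact absurd heq hA0
    · rcases (lt_or_gt_of_ne hB0) with hBlt | hBgt
      · have := case_mp h.neg (cross_neg.mpr h0) hτ (cross_neg.mpr hτc) hτf'
          (by simpa using hAgt) (by simpa using hBlt)
        simpa [abs_neg] using this
      · exact case_pp h h0 hτ hτc hτf hAgt hBgt

end FPAux

section Glue

variable {δ Δ : ℝ} {vB : ℝ → ℝ} {a : ℕ → ℝ} {b : ℕ → Choice}

lemma cumul_mem_Icc (hδ : 0 < δ) {v : ℝ → ℝ} (hv : IsDensity δ Δ v)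
    {x : ℝ} (hx : x ∈ Set.Icc (0:ℝ) 1) : cumul v x ∈ Set.Icc (0:ℝ) 1 := by
  obtain ⟨hint, hbd, hone⟩ := hv
  obtain ⟨hx0, hx1⟩ := hx
  have hsub1 : Set.uIcc (0:ℝ) x ⊆ Set.uIcc (0:ℝ) 1 := by
    rw [Set.uIcc_of_le hx0, Set.uIcc_of_le zero_le_one]
    exact Set.Icc_subset_Icc le_rfl hx1
  have hsub2 : Set.uIcc x 1 ⊆ Set.uIcc (0:ℝ) 1 := by
    rw [Set.uIcc_of_le hx1, Set.uIcc_of_le zero_le_one]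
    exact Set.Icc_subset_Icc hx0 le_rfl
  have hi1 := hint.mono_set hsub1
  have hi2 := hint.mono_set hsub2
  have h1 : 0 ≤ cumul v x :=
    intervalIntegral.integral_nonneg hx0
      (fun y hy => le_trans hδ.le (hbd y ⟨hy.1, le_trans hy.2 hx1⟩).1)
  have h2 : 0 ≤ ∫ y in x..(1:ℝ), v y :=
    intervalIntegral.integral_nonneg hx1
      (fun y hy => le_trans hδ.le (hbd y ⟨le_trans hx0 hy.1, hy.2⟩).1)
  have hadd : cumul v x + ∫ y in x..(1:ℝ), v y = 1 :=
    (intervalIntegral.integral_add_adjacent_intervals hi1 hi2).trans hone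
  exact ⟨h1, by linarith⟩

lemma alpha_succ (b : ℕ → Choice) (s : ℕ) :
    alphaFP b (s+1) = alphaFP b s + (if b (s+1) = Choice.R then 1 else -1) := by
  unfold alphaFP
  rw [Finset.sum_Icc_succ_top (Nat.le_add_left 1 s)]

lemma beta_succ (vB : ℝ → ℝ) (a : ℕ → ℝ) (s : ℕ) :
    betaFP vB a (s+1) = betaFP vB a s + (2 * cumul vB (a (s+1)) - 1) := by
  unfold betaFP
  rw [Finset.sum_Icc_succ_top (Nat.le_add_left 1 s)]

lemma alpha_int (b : ℕ → Choice) : ∀ u, ∃ n : ℤ, alphaFP b u = n := by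
  intro u
  induction u with
  | zero =>
    refine ⟨0, ?_⟩
    unfold alphaFP
    rw [Finset.Icc_eq_empty (by omega), Finset.sum_empty]
    norm_num
  | succ k ih =>
    obtain ⟨n, hn⟩ := ih
    rw [alpha_succ]
    by_cases hb : b (k+1) = Choice.R
    · exact ⟨n+1, by rw [hn, if_pos hb]; push_cast; ring⟩
    · exact ⟨n-1, by rw [hn, if_neg hb]; push_cast; ring⟩

lemma build_sys (hδ : 0 < δ) (hB : IsDensity δ Δ vB)
    (ha : ∀ t : ℕ, 1 ≤ t → a t ∈ Set.Icc (0:ℝ) 1)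
    (hfp : IsFictitiousPlay vB a b) :
    FPAux.FPSys (alphaFP b) (betaFP vB a) := by
  have hzero : cumul vB 0 = 0 := intervalIntegral.integral_same
  have hone : cumul vB 1 = 1 := hB.2.2
  have hmem : ∀ s : ℕ, 1 ≤ s → cumul vB (a s) ∈ Set.Icc (0:ℝ) 1 :=
    fun s hs => cumul_mem_Icc hδ hB (ha s hs)
  have hLR : Choice.L ≠ Choice.R := fun h => Choice.noConfusion h
  constructor
  · intro u hu
    rw [beta_succ, (hfp u).1 hu, hone]; ring
  · intro u hu
    rw [beta_succ, (hfp u).2.1 hu, hzero]; ring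
  · intro u hu
    rw [alpha_succ, (hfp u).2.2.1 hu, if_neg hLR]; ring
  · intro u hu
    rw [alpha_succ, (hfp u).2.2.2 hu, if_pos rfl]
  · intro u
    obtain ⟨hc1, hc2⟩ := hmem (u+1) (Nat.le_add_left 1 u)
    rw [beta_succ]
    rw [show betaFP vB a u + (2 * cumul vB (a (u+1)) - 1) - betaFP vB a u
        = 2 * cumul vB (a (u+1)) - 1 by ring, abs_le]
    constructor <;> linarith
  · intro u
    rw [alpha_succ]
    by_cases hb : b (u+1) = Choice.R
    · left; rw [if_pos hb]
    · right; rw [if_neg hb]; ring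
  · exact alpha_int b

end Glue

/-- If round `t−1` is axis-crossing and `τ` is the next axis-crossing round
after `t−1`, then `ρ_t − 2 ≤ τ − t ≤ ρ_t`. -/
theorem axis_crossing_spacing
    (δ Δ : ℝ) (hδ : 0 < δ) (hδΔ : δ ≤ Δ)
    (vA vB : ℝ → ℝ) (hA : IsDensity δ Δ vA) (hB : IsDensity δ Δ vB)
    (a : ℕ → ℝ) (b : ℕ → Choice)
    (ha : ∀ t : ℕ, 1 ≤ t → a t ∈ Set.Icc (0:ℝ) 1)
    (hfp : IsFictitiousPlay vB a b)
    (t τ : ℕ) (ht : 1 ≤ t)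
    (hcross : AxisCrossing vB a b (t - 1))
    (hτgt : t - 1 < τ)
    (hτcross : AxisCrossing vB a b τ)
    (hτfirst : ∀ s : ℕ, t - 1 < s → s < τ → ¬ AxisCrossing vB a b s) :
    rhoFP vB a b t - 2 ≤ (τ : ℝ) - (t : ℝ) ∧ (τ : ℝ) - (t : ℝ) ≤ rhoFP vB a b t := by
  have hsys := build_sys hδ hB ha hfp
  have hcross' : FPAux.Cross (alphaFP b) (betaFP vB a) (t-1) := hcross
  have hτcross' : FPAux.Cross (alphaFP b) (betaFP vB a) τ := hτcross
  have hτfirst' : ∀ u, t - 1 < u → u < τ → ¬ FPAux.Cross (alphaFP b) (betaFP vB a) u :=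
    fun u hu hu' hc => hτfirst u hu hu' hc
  have key := FPAux.abstract_spacing hsys hcross' hτgt hτcross' hτfirst'
  have e : t - 1 + 1 = t := by omega
  rw [e] at key
  have e2 : ((t-1 : ℕ):ℝ) + 1 = (t:ℝ) := by
    have : ((t-1:ℕ):ℝ) = (t:ℝ) - 1 := by
      push_cast [Nat.cast_sub ht]
      ring
    rw [this]; ring
  rw [e2] at key
  exact key
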